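/- For every triple (τ_x, τ_y, τ_z) ∈ ℂ³ there exist matrices x₁, x₂ ∈ SL(2,ℂ) with tr(x₁) = τ_x, tr(x₂) = τ_y, and tr(x₁x₂⁻¹) = τ_z. -/

import Mathlib

open Matrix

/-- Every triple of complex numbers is realized as `(tr x₁, tr x₂, tr(x₁x₂⁻¹))`
for some pair `x₁, x₂ ∈ SL(2,ℂ)`. -/
theorem trace_triple_surjective (tx ty tz : ℂ) :
    ∃ x₁ x₂ : Matrix.SpecialLinearGroup (Fin 2) ℂ,
      Matrix.trace (x₁ : Matrix (Fin 2) (Fin 2) ℂ) = tx ∧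
      Matrix.trace (x₂ : Matrix (Fin 2) (Fin 2) ℂ) = ty ∧
      Matrix.trace ((x₁ * x₂⁻¹ : Matrix.SpecialLinearGroup (Fin 2) ℂ) :
        Matrix (Fin 2) (Fin 2) ℂ) = tz := by
  obtain ⟨u, hu⟩ := IsAlgClosed.exists_pow_nat_eq (tz ^ 2 - 4) (n := 2) (by norm_num)
  set b : ℂ := (-tz + u) / 2 with hb
  set c : ℂ := (tz + u) / 2 with hc
  have hbc : b * c = -1 := by
    rw [hb, hc]
    linear_combination hu / 4
  refine ⟨⟨!![tx, -1; 1, 0], by simp [Matrix.det_fin_two_of]⟩,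
    ⟨!![ty, b; c, 0], by simp [Matrix.det_fin_two_of]; linear_combination -hbc⟩, ?_, ?_, ?_⟩
  · simp [Matrix.trace_fin_two]
  · simp [Matrix.trace_fin_two]
  · erw [Matrix.SpecialLinearGroup.coe_mul, Matrix.SpecialLinearGroup.coe_inv]
    simp [Matrix.adjugate_fin_two, Matrix.trace_fin_two, Matrix.mul_apply, Fin.sum_univ_two]
    rw [hb, hc]; ring
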